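/- If d ∈ D then √2 · d ∈ D. -/

import Mathlib

/-- `φ(p,q) = (p₁−q₁)² + (p₂−q₂)²` for `p, q ∈ ℂ²`. -/
noncomputable def phi2 (p q : Fin 2 → ℂ) : ℂ := (p 0 - q 0) ^ 2 + (p 1 - q 1) ^ 2

/-- `D` is the set of real `d > 0` such that for all `x, y ∈ ℝ²` with `|x−y| = d` there is a
finite set `S` with `{x,y} ⊆ S ⊆ ℝ²` such that every map `f : S → ℂ²` preserving unit
distance (i.e. `φ(f u, f v) = 1` whenever `u, v ∈ S` and `|u−v| = 1`) satisfies
`φ(f x, f y) = d²`. -/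
noncomputable def D : Set ℝ :=
  {d | 0 < d ∧ ∀ x y : EuclideanSpace ℝ (Fin 2), dist x y = d →
    ∃ S : Set (EuclideanSpace ℝ (Fin 2)), S.Finite ∧ x ∈ S ∧ y ∈ S ∧
      ∀ f : EuclideanSpace ℝ (Fin 2) → (Fin 2 → ℂ),
        (∀ u ∈ S, ∀ v ∈ S, dist u v = 1 → phi2 (f u) (f v) = 1) →
        phi2 (f x) (f y) = (d : ℂ) ^ 2}

lemma sqrt_eq' {v e : ℝ} (hv : 0 ≤ v) (h : v ^ 2 = e) : Real.sqrt e = v := by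
  rw [← h, Real.sqrt_sq hv]

lemma union_force {S T : Set (EuclideanSpace ℝ (Fin 2))} (h : S ⊆ T)
    {f : EuclideanSpace ℝ (Fin 2) → (Fin 2 → ℂ)}
    (hf : ∀ u ∈ T, ∀ v ∈ T, dist u v = 1 → phi2 (f u) (f v) = 1) :
    ∀ u ∈ S, ∀ v ∈ S, dist u v = 1 → phi2 (f u) (f v) = 1 :=
  fun u hu v hv h1 => hf u (h hu) v (h hv) h1

lemma exists_frame (x y : EuclideanSpace ℝ (Fin 2)) (α β : ℝ) (hpos : 0 < α^2+β^2)
    (hxy : dist x y = Real.sqrt (α^2+β^2)) :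
    ∃ g : ℝ → ℝ → EuclideanSpace ℝ (Fin 2), g 0 0 = x ∧ g α β = y ∧
      ∀ a b a' b', dist (g a b) (g a' b') = Real.sqrt ((a-a')^2+(b-b')^2) := by
  have hc2ne : α^2+β^2 ≠ 0 := ne_of_gt hpos
  have hd : dist x y = Real.sqrt ((x 0 - y 0)^2 + (x 1 - y 1)^2) := by
    rw [EuclideanSpace.dist_eq, Fin.sum_univ_two]
    simp [Real.dist_eq, sq_abs]
  have hu : (y 0 - x 0)^2 + (y 1 - x 1)^2 = α^2+β^2 := by
    have h0 := hd.symm.trans hxy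
    have h2 := congrArg (· ^ 2) h0
    simp only at h2
    rw [Real.sq_sqrt (by positivity : (0:ℝ) ≤ (x 0 - y 0)^2 + (x 1 - y 1)^2),
      Real.sq_sqrt hpos.le] at h2
    linear_combination h2
  set e10 : ℝ := (α*(y 0 - x 0) + β*(y 1 - x 1))/(α^2+β^2) with he10
  set e11 : ℝ := (α*(y 1 - x 1) - β*(y 0 - x 0))/(α^2+β^2) with he11
  have hee : e10^2 + e11^2 = 1 := by
    rw [he10, he11]
    field_simp
    linear_combination (α^2+β^2) * hu
  have hy0 : x 0 + α*e10 - β*e11 = y 0 := by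
    rw [he10, he11]; field_simp; ring
  have hy1 : x 1 + α*e11 + β*e10 = y 1 := by
    rw [he10, he11]; field_simp; ring
  refine ⟨fun a b => (WithLp.equiv 2 (Fin 2 → ℝ)).symm ![x 0 + a*e10 - b*e11, x 1 + a*e11 + b*e10],
    ?_, ?_, ?_⟩
  · apply PiLp.ext
    intro i
    fin_cases i <;> simp
  · apply PiLp.ext
    intro i
    fin_cases i <;> simpa using (by assumption)
  · intro a b a' b'
    rw [EuclideanSpace.dist_eq, Fin.sum_univ_two]
    simp only [WithLp.equiv_symm_apply, PiLp.toLp_apply, Matrix.cons_val_zero, Matrix.cons_val_one,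
      Matrix.head_cons]
    rw [Real.dist_eq, Real.dist_eq, sq_abs, sq_abs]
    congr 1
    linear_combination ((a-a')^2 + (b-b')^2) * hee

lemma key_iso (u0 u1 v0 v1 : ℂ) (hv : v0^2 + v1^2 = 0) (huv : u0*v0 + u1*v1 = 0)
    (hu : u0^2 + u1^2 ≠ 0) : v0 = 0 ∧ v1 = 0 := by
  have h0 : v0^2 * (u0^2+u1^2) = 0 := by
    linear_combination (u0*v0 - u1*v1) * huv + u1^2 * hv
  have h1 : v1^2 * (u0^2+u1^2) = 0 := by
    linear_combination (u1*v1 - u0*v0) * huv + u0^2 * hv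
  constructor
  · exact pow_eq_zero_iff two_ne_zero |>.mp ((mul_eq_zero.mp h0).resolve_right hu)
  · exact pow_eq_zero_iff two_ne_zero |>.mp ((mul_eq_zero.mp h1).resolve_right hu)

lemma eq_of_B (c u0 u1 w0 w1 : ℂ) (hu : u0^2+u1^2 = c) (hw : w0^2+w1^2 = c)
    (hB : u0*w0 + u1*w1 = c) (hc : c ≠ 0) : w0 = u0 ∧ w1 = u1 := by
  have hu' : u0^2 + u1^2 ≠ 0 := by rw [hu]; exact hc
  have h := key_iso u0 u1 (w0-u0) (w1-u1) (by linear_combination hu + hw - 2*hB)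
      (by linear_combination hB - hu) hu'
  exact ⟨sub_eq_zero.mp h.1, sub_eq_zero.mp h.2⟩

lemma gram_val (u0 u1 v0 v1 w0 w1 qu qv qw buv buw bvw : ℂ)
    (h1 : u0^2+u1^2 = qu) (h2 : v0^2+v1^2 = qv) (h3 : w0^2+w1^2 = qw)
    (h4 : u0*v0+u1*v1 = buv) (h5 : u0*w0+u1*w1 = buw) (h6 : v0*w0+v1*w1 = bvw) :
    qu*qv*qw + 2*buv*bvw*buw - qu*bvw^2 - qv*buw^2 - qw*buv^2 = 0 := by
  subst h1 h2 h3 h4 h5 h6; ring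

/-- Rhombus with a unit diagonal: the other diagonal is `3c` or the two tips coincide. -/
lemma alg_rhombus (A R S U : Fin 2 → ℂ) (c : ℂ) (hc : c ≠ 0)
    (h1 : phi2 A R = c) (h2 : phi2 A S = c) (h3 : phi2 U R = c) (h4 : phi2 U S = c)
    (h5 : phi2 R S = c) : phi2 A U = 3*c ∨ (U 0 = A 0 ∧ U 1 = A 1) := by
  simp only [phi2] at h1 h2 h3 h4 h5 ⊢
  set t : ℂ := (A 0 - U 0)^2 + (A 1 - U 1)^2 with htdef
  have hBa : (R 0 - A 0)*(U 0 - A 0) + (R 1 - A 1)*(U 1 - A 1) = t/2 := by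
    rw [htdef]; linear_combination (h1 - h3)/2
  have hBb : (S 0 - A 0)*(U 0 - A 0) + (S 1 - A 1)*(U 1 - A 1) = t/2 := by
    rw [htdef]; linear_combination (h2 - h4)/2
  have hBab : (R 0 - A 0)*(S 0 - A 0) + (R 1 - A 1)*(S 1 - A 1) = c/2 := by
    linear_combination (h1 + h2 - h5)/2
  have G := gram_val (R 0 - A 0) (R 1 - A 1) (S 0 - A 0) (S 1 - A 1) (U 0 - A 0) (U 1 - A 1)
    c c t (c/2) (t/2) (t/2) (by linear_combination h1) (by linear_combination h2)
    (by rw [htdef]; ring) hBab hBa hBb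
  have hq : (c*t) * (3*c - t) = 0 := by linear_combination 4*G
  rcases mul_eq_zero.mp hq with h | h
  · have ht0 : t = 0 := (mul_eq_zero.mp h).resolve_left hc
    right
    have hu' : (R 0 - A 0)^2 + (R 1 - A 1)^2 ≠ 0 := by
      rw [show (R 0 - A 0)^2 + (R 1 - A 1)^2 = c by linear_combination h1]; exact hc
    have h := key_iso (R 0 - A 0) (R 1 - A 1) (U 0 - A 0) (U 1 - A 1)
      (by linear_combination ht0 - htdef) (by rw [hBa, ht0]; ring) hu'
    exact ⟨sub_eq_zero.mp h.1, sub_eq_zero.mp h.2⟩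
  · left; linear_combination -h

/-- Regular hexagon half: forces the long diagonal. -/
lemma alg_hexagon (M A P Q Y : Fin 2 → ℂ) (c : ℂ) (hc : c ≠ 0)
    (hMA : phi2 M A = c) (hMP : phi2 M P = c) (hMQ : phi2 M Q = c) (hMY : phi2 M Y = c)
    (hAP : phi2 A P = c) (hPQ : phi2 P Q = c) (hQY : phi2 Q Y = c)
    (hAQ : phi2 A Q = 3*c) (hPY : phi2 P Y = 3*c) : phi2 A Y = 4*c := by
  simp only [phi2] at hMA hMP hMQ hMY hAP hPQ hQY hAQ hPY ⊢
  have hab : (A 0 - M 0)*(P 0 - M 0) + (A 1 - M 1)*(P 1 - M 1) = c/2 := by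
    linear_combination (hMA + hMP - hAP)/2
  have hbq : (P 0 - M 0)*(Q 0 - M 0) + (P 1 - M 1)*(Q 1 - M 1) = c/2 := by
    linear_combination (hMP + hMQ - hPQ)/2
  have hqe : (Q 0 - M 0)*(Y 0 - M 0) + (Q 1 - M 1)*(Y 1 - M 1) = c/2 := by
    linear_combination (hMQ + hMY - hQY)/2
  have haq : (A 0 - M 0)*(Q 0 - M 0) + (A 1 - M 1)*(Q 1 - M 1) = -c/2 := by
    linear_combination (hMA + hMQ - hAQ)/2
  have hbe : (P 0 - M 0)*(Y 0 - M 0) + (P 1 - M 1)*(Y 1 - M 1) = -c/2 := by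
    linear_combination (hMP + hMY - hPY)/2
  set z0 : ℂ := Y 0 - M 0 + (A 0 - M 0) with hz0
  set z1 : ℂ := Y 1 - M 1 + (A 1 - M 1) with hz1
  have hbz : (P 0 - M 0)*z0 + (P 1 - M 1)*z1 = 0 := by
    rw [hz0, hz1]; linear_combination hab + hbe
  have hqz : (Q 0 - M 0)*z0 + (Q 1 - M 1)*z1 = 0 := by
    rw [hz0, hz1]; linear_combination haq + hqe
  set QZ : ℂ := z0^2 + z1^2 with hQZ
  have G := gram_val (P 0 - M 0) (P 1 - M 1) (Q 0 - M 0) (Q 1 - M 1) z0 z1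
    c c QZ (c/2) 0 0 (by linear_combination hMP) (by linear_combination hMQ)
    hQZ.symm hbq hbz hqz
  have hZ0 : QZ = 0 := by
    have h34 : c^2 * QZ = 0 := by linear_combination (4/3 : ℂ)*G
    exact (mul_eq_zero.mp h34).resolve_left (pow_ne_zero 2 hc)
  have hcne : (P 0 - M 0)^2 + (P 1 - M 1)^2 ≠ 0 := by
    rw [show (P 0 - M 0)^2 + (P 1 - M 1)^2 = c by linear_combination hMP]; exact hc
  have hz := key_iso (P 0 - M 0) (P 1 - M 1) z0 z1 (by rw [← hQZ]; exact hZ0) hbz hcne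
  have hY0 : Y 0 = 2*M 0 - A 0 := by
    have := hz.1; rw [hz0] at this; linear_combination this
  have hY1 : Y 1 = 2*M 1 - A 1 := by
    have := hz.2; rw [hz1] at this; linear_combination this
  rw [hY0, hY1]
  linear_combination 4*hMA

/-- Three collinear unit steps forced equal. -/
lemma alg_chain3 (P0 P1 P2 P3 : Fin 2 → ℂ) (c : ℂ) (hc : c ≠ 0)
    (h01 : phi2 P0 P1 = c) (h12 : phi2 P1 P2 = c) (h23 : phi2 P2 P3 = c)
    (h02 : phi2 P0 P2 = 4*c) (h13 : phi2 P1 P3 = 4*c) :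
    (P2 0 = 2*P1 0 - P0 0 ∧ P2 1 = 2*P1 1 - P0 1) ∧
    (P3 0 = 3*P1 0 - 2*P0 0 ∧ P3 1 = 3*P1 1 - 2*P0 1) := by
  simp only [phi2] at h01 h12 h23 h02 h13
  have s1 := eq_of_B c (P1 0 - P0 0) (P1 1 - P0 1) (P2 0 - P1 0) (P2 1 - P1 1)
    (by linear_combination h01) (by linear_combination h12)
    (by linear_combination (h02 - h01 - h12)/2) hc
  have s2 := eq_of_B c (P2 0 - P1 0) (P2 1 - P1 1) (P3 0 - P2 0) (P3 1 - P2 1)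
    (by linear_combination h12) (by linear_combination h23)
    (by linear_combination (h13 - h12 - h23)/2) hc
  refine ⟨⟨by linear_combination s1.1, by linear_combination s1.2⟩,
    ⟨by linear_combination s2.1 + 2*s1.1, by linear_combination s2.2 + 2*s1.2⟩⟩

/-- Two collinear unit steps forced equal. -/
lemma alg_chain2 (P0 P1 P2 : Fin 2 → ℂ) (c : ℂ) (hc : c ≠ 0)
    (h01 : phi2 P0 P1 = c) (h12 : phi2 P1 P2 = c) (h02 : phi2 P0 P2 = 4*c) :
    P2 0 = 2*P1 0 - P0 0 ∧ P2 1 = 2*P1 1 - P0 1 := by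
  simp only [phi2] at h01 h12 h02
  have s1 := eq_of_B c (P1 0 - P0 0) (P1 1 - P0 1) (P2 0 - P1 0) (P2 1 - P1 1)
    (by linear_combination h01) (by linear_combination h12)
    (by linear_combination (h02 - h01 - h12)/2) hc
  exact ⟨by linear_combination s1.1, by linear_combination s1.2⟩

/-- Forcing the distance √13·d. -/
lemma alg_sqrt13 (X P1 W1 Q1 Q2 Q3 : Fin 2 → ℂ) (c : ℂ) (hc : c ≠ 0)
    (hxP1 : phi2 X P1 = c) (hxW1 : phi2 X W1 = c) (hP1W1 : phi2 P1 W1 = c)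
    (hP1Q1 : phi2 P1 Q1 = c) (hW1Q1 : phi2 W1 Q1 = c)
    (hQ1Q2 : phi2 Q1 Q2 = c) (hQ2Q3 : phi2 Q2 Q3 = c)
    (hP1Q2 : phi2 P1 Q2 = 4*c) (hQ1Q3 : phi2 Q1 Q3 = 4*c)
    (hxQ1 : phi2 X Q1 = 3*c) : phi2 X Q3 = 13*c := by
  obtain ⟨-, h30, h31⟩ := alg_chain3 P1 Q1 Q2 Q3 c hc hP1Q1 hQ1Q2 hQ2Q3 hP1Q2 hQ1Q3
  simp only [phi2] at hxP1 hxW1 hP1W1 hP1Q1 hW1Q1 hxQ1 ⊢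
  have hug : (P1 0 - X 0)*(W1 0 - X 0) + (P1 1 - X 1)*(W1 1 - X 1) = c/2 := by
    linear_combination (hxP1 + hxW1 - hP1W1)/2
  have hug' : (P1 0 - X 0)*(Q1 0 - P1 0) + (P1 1 - X 1)*(Q1 1 - P1 1) = c/2 := by
    linear_combination (hxQ1 - hxP1 - hP1Q1)/2
  have hgg' : (W1 0 - X 0)*(Q1 0 - P1 0) + (W1 1 - X 1)*(Q1 1 - P1 1) = c := by
    linear_combination (hxW1 + hxP1 + hP1Q1 - hW1Q1)/2 - hug + hug'
  have s := eq_of_B c (W1 0 - X 0) (W1 1 - X 1) (Q1 0 - P1 0) (Q1 1 - P1 1)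
    (by linear_combination hxW1) (by linear_combination hP1Q1) hgg' hc
  have hq0 : Q1 0 = P1 0 + W1 0 - X 0 := by linear_combination s.1
  have hq1 : Q1 1 = P1 1 + W1 1 - X 1 := by linear_combination s.2
  rw [h30, h31, hq0, hq1]
  linear_combination hxP1 + 9*hxW1 + 6*hug

/-- Forcing the distance √2·d. -/
lemma alg_sqrt2 (X Z1 Z2 W1 W2 W3 Y T1 T2 T3 : Fin 2 → ℂ) (c : ℂ) (hc : c ≠ 0)
    (hxz : phi2 X Z1 = c) (hzZ : phi2 Z1 Z2 = c) (hxZ : phi2 X Z2 = 4*c)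
    (hxw : phi2 X W1 = c) (hwW2 : phi2 W1 W2 = c) (hW2W3 : phi2 W2 W3 = c)
    (hxW2 : phi2 X W2 = 4*c) (hwW3 : phi2 W1 W3 = 4*c)
    (hZT1 : phi2 Z2 T1 = c) (hT1T2 : phi2 T1 T2 = c) (hT2T3 : phi2 T2 T3 = c)
    (hZT2 : phi2 Z2 T2 = 4*c) (hT1T3 : phi2 T1 T3 = 4*c)
    (hzy : phi2 Z1 Y = c) (hwy : phi2 W1 Y = c) (hyT1 : phi2 Y T1 = c)
    (hwT1 : phi2 W1 T1 = 4*c)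
    (h13a : phi2 X T3 = 13*c) (h13b : phi2 Z2 W3 = 13*c) : phi2 X Y = 2*c := by
  obtain ⟨hZ0, hZ1c⟩ := alg_chain2 X Z1 Z2 c hc hxz hzZ hxZ
  obtain ⟨-, hW30, hW31⟩ := alg_chain3 X W1 W2 W3 c hc hxw hwW2 hW2W3 hxW2 hwW3
  obtain ⟨-, hT30, hT31⟩ := alg_chain3 Z2 T1 T2 T3 c hc hZT1 hT1T2 hT2T3 hZT2 hT1T3
  simp only [phi2] at hxz hxw hZT1 hzy hwy hyT1 hwT1 h13a h13b ⊢
  rw [hZ0, hZ1c, hW30, hW31] at h13b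
  rw [hZ0, hZ1c] at hZT1
  rw [hT30, hT31, hZ0, hZ1c] at h13a
  -- B(u,w) = 0 where u = Z1 - X, w = W1 - X
  have hBuw : (Z1 0 - X 0)*(W1 0 - X 0) + (Z1 1 - X 1)*(W1 1 - X 1) = 0 := by
    linear_combination (9*hxw + 4*hxz - h13b)/12
  -- B(u, w2) = 0 where w2 = T1 - Z2
  have hBuw2 : (Z1 0 - X 0)*(T1 0 - (2*Z1 0 - X 0)) + (Z1 1 - X 1)*(T1 1 - (2*Z1 1 - X 1)) = 0 := by
    linear_combination (h13a - 9*hZT1 - 4*hxz)/12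
  -- B(w2, w) = c
  have hBw2w : (W1 0 - X 0)*(T1 0 - (2*Z1 0 - X 0)) + (W1 1 - X 1)*(T1 1 - (2*Z1 1 - X 1)) = c := by
    linear_combination (hZT1 + 4*hxz + hxw - hwT1)/2 + 2*hBuw2 - 2*hBuw
  have s := eq_of_B c (W1 0 - X 0) (W1 1 - X 1) (T1 0 - (2*Z1 0 - X 0)) (T1 1 - (2*Z1 1 - X 1))
    (by linear_combination hxw) (by linear_combination hZT1) hBw2w hc
  have hT10 : T1 0 = 2*Z1 0 - X 0 + W1 0 - X 0 := by linear_combination s.1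
  have hT11 : T1 1 = 2*Z1 1 - X 1 + W1 1 - X 1 := by linear_combination s.2
  rw [hT10, hT11] at hyT1
  linear_combination (2*hzy + hwy + 2*hxz - hyT1)/2 + 2*hBuw

/-- Moser spindle : forcing the distance √3·d. -/
lemma alg_spindle (A U V R1 R2 S1 S2 : Fin 2 → ℂ) (c : ℂ) (hc : c ≠ 0)
    (h1 : phi2 A R1 = c) (h2 : phi2 A R2 = c) (h3 : phi2 U R1 = c) (h4 : phi2 U R2 = c)
    (h5 : phi2 R1 R2 = c)
    (k1 : phi2 A S1 = c) (k2 : phi2 A S2 = c) (k3 : phi2 V S1 = c) (k4 : phi2 V S2 = c)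
    (k5 : phi2 S1 S2 = c) (hUV : phi2 U V = c) : phi2 A U = 3*c := by
  rcases alg_rhombus A R1 R2 U c hc h1 h2 h3 h4 h5 with h | h
  · exact h
  · exfalso
    rcases alg_rhombus A S1 S2 V c hc k1 k2 k3 k4 k5 with h' | h'
    · simp only [phi2] at hUV h' ⊢
      rw [h.1, h.2] at hUV
      have : c = 3*c := by linear_combination h' - hUV
      exact hc (by linear_combination -this/2)
    · simp only [phi2] at hUV
      rw [h.1, h.2, h'.1, h'.2] at hUV
      exact hc (by linear_combination -hUV)

lemma sqrt3_mem {d : ℝ} (hd : d ∈ D) : Real.sqrt 3 * d ∈ D := by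
  obtain ⟨hd0, hD⟩ := hd
  have h3 : Real.sqrt 3 ^ 2 = 3 := Real.sq_sqrt (by norm_num)
  have h33 : Real.sqrt 33 ^ 2 = 33 := Real.sq_sqrt (by norm_num)
  have hc : ((d:ℝ):ℂ)^2 ≠ 0 := pow_ne_zero 2 (Complex.ofReal_ne_zero.mpr hd0.ne')
  refine ⟨by positivity, ?_⟩
  intro x y hxy
  obtain ⟨g, hg0, hgy, hgd⟩ := exists_frame x y (Real.sqrt 3 * d) 0 (by positivity)
    (by rw [hxy]; exact (sqrt_eq' (by positivity) (by ring)).symm)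
  rw [← hg0, ← hgy]
  have hxv : dist (g 0 0) (g (5*Real.sqrt 3/6*d) (Real.sqrt 33/6*d))
      = Real.sqrt ((Real.sqrt 3*d)^2 + 0^2) := by
    rw [hgd]; congr 1
    linear_combination (-(11/36)*d^2)*h3 + ((1/36)*d^2)*h33
  obtain ⟨g2, hg20, hg2y, hg2d⟩ := exists_frame (g 0 0)
    (g (5*Real.sqrt 3/6*d) (Real.sqrt 33/6*d)) (Real.sqrt 3 * d) 0
    (by positivity) hxv
  -- eleven unit pairs
  obtain ⟨S1, f1, m1a, m1b, F1⟩ := hD (g 0 0) (g (Real.sqrt 3/2*d) (d/2))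
    (by rw [hgd]; exact sqrt_eq' hd0.le (by linear_combination (-(d^2)/4)*h3))
  obtain ⟨S2, f2, m2a, m2b, F2⟩ := hD (g 0 0) (g (Real.sqrt 3/2*d) (-(d/2)))
    (by rw [hgd]; exact sqrt_eq' hd0.le (by linear_combination (-(d^2)/4)*h3))
  obtain ⟨S3, f3, m3a, m3b, F3⟩ := hD (g (Real.sqrt 3*d) 0) (g (Real.sqrt 3/2*d) (d/2))
    (by rw [hgd]; exact sqrt_eq' hd0.le (by linear_combination (-(d^2)/4)*h3))
  obtain ⟨S4, f4, m4a, m4b, F4⟩ := hD (g (Real.sqrt 3*d) 0) (g (Real.sqrt 3/2*d) (-(d/2)))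
    (by rw [hgd]; exact sqrt_eq' hd0.le (by linear_combination (-(d^2)/4)*h3))
  obtain ⟨S5, f5, m5a, m5b, F5⟩ := hD (g (Real.sqrt 3/2*d) (d/2)) (g (Real.sqrt 3/2*d) (-(d/2)))
    (by rw [hgd]; exact sqrt_eq' hd0.le (by ring))
  obtain ⟨S6, f6, m6a, m6b, F6⟩ := hD (g2 0 0) (g2 (Real.sqrt 3/2*d) (d/2))
    (by rw [hg2d]; exact sqrt_eq' hd0.le (by linear_combination (-(d^2)/4)*h3))
  obtain ⟨S7, f7, m7a, m7b, F7⟩ := hD (g2 0 0) (g2 (Real.sqrt 3/2*d) (-(d/2)))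
    (by rw [hg2d]; exact sqrt_eq' hd0.le (by linear_combination (-(d^2)/4)*h3))
  obtain ⟨S8, f8, m8a, m8b, F8⟩ := hD (g2 (Real.sqrt 3*d) 0) (g2 (Real.sqrt 3/2*d) (d/2))
    (by rw [hg2d]; exact sqrt_eq' hd0.le (by linear_combination (-(d^2)/4)*h3))
  obtain ⟨S9, f9, m9a, m9b, F9⟩ := hD (g2 (Real.sqrt 3*d) 0) (g2 (Real.sqrt 3/2*d) (-(d/2)))
    (by rw [hg2d]; exact sqrt_eq' hd0.le (by linear_combination (-(d^2)/4)*h3))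
  obtain ⟨S10, f10, m10a, m10b, F10⟩ := hD (g2 (Real.sqrt 3/2*d) (d/2)) (g2 (Real.sqrt 3/2*d) (-(d/2)))
    (by rw [hg2d]; exact sqrt_eq' hd0.le (by ring))
  obtain ⟨S11, f11, m11a, m11b, F11⟩ := hD (g (Real.sqrt 3*d) 0) (g (5*Real.sqrt 3/6*d) (Real.sqrt 33/6*d))
    (by rw [hgd]; exact sqrt_eq' hd0.le (by linear_combination (-(1/36)*d^2)*h3 - ((1/36)*d^2)*h33))
  refine ⟨S1 ∪ S2 ∪ S3 ∪ S4 ∪ S5 ∪ S6 ∪ S7 ∪ S8 ∪ S9 ∪ S10 ∪ S11,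
    ((((((((((f1.union f2).union f3).union f4).union f5).union f6).union f7).union f8).union f9).union f10).union f11),
    by simp only [Set.mem_union]; tauto, by simp only [Set.mem_union]; tauto, ?_⟩
  intro f hf
  have e1 := F1 f (union_force (by intro a ha; simp only [Set.mem_union]; tauto) hf)
  have e2 := F2 f (union_force (by intro a ha; simp only [Set.mem_union]; tauto) hf)
  have e3 := F3 f (union_force (by intro a ha; simp only [Set.mem_union]; tauto) hf)
  have e4 := F4 f (union_force (by intro a ha; simp only [Set.mem_union]; tauto) hf)
  have e5 := F5 f (union_force (by intro a ha; simp only [Set.mem_union]; tauto) hf)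
  have e6 := F6 f (union_force (by intro a ha; simp only [Set.mem_union]; tauto) hf)
  have e7 := F7 f (union_force (by intro a ha; simp only [Set.mem_union]; tauto) hf)
  have e8 := F8 f (union_force (by intro a ha; simp only [Set.mem_union]; tauto) hf)
  have e9 := F9 f (union_force (by intro a ha; simp only [Set.mem_union]; tauto) hf)
  have e10 := F10 f (union_force (by intro a ha; simp only [Set.mem_union]; tauto) hf)
  have e11 := F11 f (union_force (by intro a ha; simp only [Set.mem_union]; tauto) hf)
  rw [hg20] at e6 e7
  rw [hg2y] at e8 e9
  have hval : ((Real.sqrt 3 * d : ℝ) : ℂ)^2 = 3*((d:ℝ):ℂ)^2 := by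
    rw [Complex.ofReal_mul, mul_pow, ← Complex.ofReal_pow, h3]
    norm_num
  rw [hval]
  exact alg_spindle (f (g 0 0)) (f (g (Real.sqrt 3*d) 0))
    (f (g (5*Real.sqrt 3/6*d) (Real.sqrt 33/6*d)))
    (f (g (Real.sqrt 3/2*d) (d/2))) (f (g (Real.sqrt 3/2*d) (-(d/2))))
    (f (g2 (Real.sqrt 3/2*d) (d/2))) (f (g2 (Real.sqrt 3/2*d) (-(d/2))))
    (((d:ℝ):ℂ)^2) hc e1 e2 e3 e4 e5 e6 e7 e8 e9 e10 e11

lemma two_mem {d : ℝ} (hd : d ∈ D) (h3D : Real.sqrt 3 * d ∈ D) : 2 * d ∈ D := by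
  obtain ⟨hd0, hD⟩ := hd
  have h3 : Real.sqrt 3 ^ 2 = 3 := Real.sq_sqrt (by norm_num)
  have hc : ((d:ℝ):ℂ)^2 ≠ 0 := pow_ne_zero 2 (Complex.ofReal_ne_zero.mpr hd0.ne')
  refine ⟨by positivity, ?_⟩
  intro x y hxy
  obtain ⟨g, hg0, hgy, hgd⟩ := exists_frame x y (2*d) 0 (by positivity)
    (by rw [hxy]; exact (sqrt_eq' (by positivity) (by ring)).symm)
  rw [← hg0, ← hgy]
  obtain ⟨S1, f1, m1a, m1b, F1⟩ := hD (g d 0) (g 0 0)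
    (by rw [hgd]; exact sqrt_eq' hd0.le (by ring))
  obtain ⟨S2, f2, m2a, m2b, F2⟩ := hD (g d 0) (g (d/2) (Real.sqrt 3/2*d))
    (by rw [hgd]; exact sqrt_eq' hd0.le (by linear_combination (-(d^2)/4)*h3))
  obtain ⟨S3, f3, m3a, m3b, F3⟩ := hD (g d 0) (g (3*d/2) (Real.sqrt 3/2*d))
    (by rw [hgd]; exact sqrt_eq' hd0.le (by linear_combination (-(d^2)/4)*h3))
  obtain ⟨S4, f4, m4a, m4b, F4⟩ := hD (g d 0) (g (2*d) 0)
    (by rw [hgd]; exact sqrt_eq' hd0.le (by ring))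
  obtain ⟨S5, f5, m5a, m5b, F5⟩ := hD (g 0 0) (g (d/2) (Real.sqrt 3/2*d))
    (by rw [hgd]; exact sqrt_eq' hd0.le (by linear_combination (-(d^2)/4)*h3))
  obtain ⟨S6, f6, m6a, m6b, F6⟩ := hD (g (d/2) (Real.sqrt 3/2*d)) (g (3*d/2) (Real.sqrt 3/2*d))
    (by rw [hgd]; exact sqrt_eq' hd0.le (by ring))
  obtain ⟨S7, f7, m7a, m7b, F7⟩ := hD (g (3*d/2) (Real.sqrt 3/2*d)) (g (2*d) 0)
    (by rw [hgd]; exact sqrt_eq' hd0.le (by linear_combination (-(d^2)/4)*h3))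
  obtain ⟨S8, f8, m8a, m8b, F8⟩ := h3D.2 (g 0 0) (g (3*d/2) (Real.sqrt 3/2*d))
    (by rw [hgd]; exact sqrt_eq' (by positivity) (by linear_combination ((3/4)*d^2)*h3))
  obtain ⟨S9, f9, m9a, m9b, F9⟩ := h3D.2 (g (d/2) (Real.sqrt 3/2*d)) (g (2*d) 0)
    (by rw [hgd]; exact sqrt_eq' (by positivity) (by linear_combination ((3/4)*d^2)*h3))
  refine ⟨S1 ∪ S2 ∪ S3 ∪ S4 ∪ S5 ∪ S6 ∪ S7 ∪ S8 ∪ S9,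
    ((((((((f1.union f2).union f3).union f4).union f5).union f6).union f7).union f8).union f9),
    by simp only [Set.mem_union]; tauto, by simp only [Set.mem_union]; tauto, ?_⟩
  intro f hf
  have e1 := F1 f (union_force (by intro a ha; simp only [Set.mem_union]; tauto) hf)
  have e2 := F2 f (union_force (by intro a ha; simp only [Set.mem_union]; tauto) hf)
  have e3 := F3 f (union_force (by intro a ha; simp only [Set.mem_union]; tauto) hf)
  have e4 := F4 f (union_force (by intro a ha; simp only [Set.mem_union]; tauto) hf)
  have e5 := F5 f (union_force (by intro a ha; simp only [Set.mem_union]; tauto) hf)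
  have e6 := F6 f (union_force (by intro a ha; simp only [Set.mem_union]; tauto) hf)
  have e7 := F7 f (union_force (by intro a ha; simp only [Set.mem_union]; tauto) hf)
  have e8 := F8 f (union_force (by intro a ha; simp only [Set.mem_union]; tauto) hf)
  have e9 := F9 f (union_force (by intro a ha; simp only [Set.mem_union]; tauto) hf)
  have hval : ((Real.sqrt 3 * d : ℝ) : ℂ)^2 = 3*((d:ℝ):ℂ)^2 := by
    rw [Complex.ofReal_mul, mul_pow, ← Complex.ofReal_pow, h3]; norm_num
  rw [hval] at e8 e9
  have hval2 : ((2 * d : ℝ) : ℂ)^2 = 4*((d:ℝ):ℂ)^2 := by push_cast; ring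
  rw [hval2]
  exact alg_hexagon (f (g d 0)) (f (g 0 0)) (f (g (d/2) (Real.sqrt 3/2*d)))
    (f (g (3*d/2) (Real.sqrt 3/2*d))) (f (g (2*d) 0)) (((d:ℝ):ℂ)^2) hc
    e1 e2 e3 e4 e5 e6 e7 e8 e9

lemma sqrt13_mem {d : ℝ} (hd : d ∈ D) (h2D : 2*d ∈ D) (h3D : Real.sqrt 3 * d ∈ D) :
    Real.sqrt 13 * d ∈ D := by
  obtain ⟨hd0, hD⟩ := hd
  have h3 : Real.sqrt 3 ^ 2 = 3 := Real.sq_sqrt (by norm_num)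
  have h13s : Real.sqrt 13 ^ 2 = 13 := Real.sq_sqrt (by norm_num)
  have hc : ((d:ℝ):ℂ)^2 ≠ 0 := pow_ne_zero 2 (Complex.ofReal_ne_zero.mpr hd0.ne')
  refine ⟨by positivity, ?_⟩
  intro x y hxy
  obtain ⟨g, hg0, hgy, hgd⟩ := exists_frame x y (5*d/2) (3*Real.sqrt 3/2*d) (by positivity)
    (by rw [hxy]; exact (sqrt_eq' (by positivity)
      (by linear_combination (d^2)*h13s - ((9/4)*d^2)*h3)).symm)
  rw [← hg0, ← hgy]
  obtain ⟨S1, f1, m1a, m1b, F1⟩ := hD (g 0 0) (g d 0)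
    (by rw [hgd]; exact sqrt_eq' hd0.le (by ring))
  obtain ⟨S2, f2, m2a, m2b, F2⟩ := hD (g 0 0) (g (d/2) (Real.sqrt 3/2*d))
    (by rw [hgd]; exact sqrt_eq' hd0.le (by linear_combination (-(d^2)/4)*h3))
  obtain ⟨S3, f3, m3a, m3b, F3⟩ := hD (g d 0) (g (d/2) (Real.sqrt 3/2*d))
    (by rw [hgd]; exact sqrt_eq' hd0.le (by linear_combination (-(d^2)/4)*h3))
  obtain ⟨S4, f4, m4a, m4b, F4⟩ := hD (g d 0) (g (3*d/2) (Real.sqrt 3/2*d))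
    (by rw [hgd]; exact sqrt_eq' hd0.le (by linear_combination (-(d^2)/4)*h3))
  obtain ⟨S5, f5, m5a, m5b, F5⟩ := hD (g (d/2) (Real.sqrt 3/2*d)) (g (3*d/2) (Real.sqrt 3/2*d))
    (by rw [hgd]; exact sqrt_eq' hd0.le (by ring))
  obtain ⟨S6, f6, m6a, m6b, F6⟩ := hD (g (3*d/2) (Real.sqrt 3/2*d)) (g (2*d) (Real.sqrt 3*d))
    (by rw [hgd]; exact sqrt_eq' hd0.le (by linear_combination (-(d^2)/4)*h3))
  obtain ⟨S7, f7, m7a, m7b, F7⟩ := hD (g (2*d) (Real.sqrt 3*d)) (g (5*d/2) (3*Real.sqrt 3/2*d))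
    (by rw [hgd]; exact sqrt_eq' hd0.le (by linear_combination (-(d^2)/4)*h3))
  obtain ⟨S8, f8, m8a, m8b, F8⟩ := h2D.2 (g d 0) (g (2*d) (Real.sqrt 3*d))
    (by rw [hgd]; exact sqrt_eq' (by positivity) (by linear_combination (-(d^2))*h3))
  obtain ⟨S9, f9, m9a, m9b, F9⟩ := h2D.2 (g (3*d/2) (Real.sqrt 3/2*d)) (g (5*d/2) (3*Real.sqrt 3/2*d))
    (by rw [hgd]; exact sqrt_eq' (by positivity) (by linear_combination (-(d^2))*h3))
  obtain ⟨S10, f10, m10a, m10b, F10⟩ := h3D.2 (g 0 0) (g (3*d/2) (Real.sqrt 3/2*d))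
    (by rw [hgd]; exact sqrt_eq' (by positivity) (by linear_combination ((3/4)*d^2)*h3))
  refine ⟨S1 ∪ S2 ∪ S3 ∪ S4 ∪ S5 ∪ S6 ∪ S7 ∪ S8 ∪ S9 ∪ S10,
    (((((((((f1.union f2).union f3).union f4).union f5).union f6).union f7).union f8).union f9).union f10),
    by simp only [Set.mem_union]; tauto, by simp only [Set.mem_union]; tauto, ?_⟩
  intro f hf
  have e1 := F1 f (union_force (by intro a ha; simp only [Set.mem_union]; tauto) hf)
  have e2 := F2 f (union_force (by intro a ha; simp only [Set.mem_union]; tauto) hf)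
  have e3 := F3 f (union_force (by intro a ha; simp only [Set.mem_union]; tauto) hf)
  have e4 := F4 f (union_force (by intro a ha; simp only [Set.mem_union]; tauto) hf)
  have e5 := F5 f (union_force (by intro a ha; simp only [Set.mem_union]; tauto) hf)
  have e6 := F6 f (union_force (by intro a ha; simp only [Set.mem_union]; tauto) hf)
  have e7 := F7 f (union_force (by intro a ha; simp only [Set.mem_union]; tauto) hf)
  have e8 := F8 f (union_force (by intro a ha; simp only [Set.mem_union]; tauto) hf)
  have e9 := F9 f (union_force (by intro a ha; simp only [Set.mem_union]; tauto) hf)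
  have e10 := F10 f (union_force (by intro a ha; simp only [Set.mem_union]; tauto) hf)
  have hval3 : ((Real.sqrt 3 * d : ℝ) : ℂ)^2 = 3*((d:ℝ):ℂ)^2 := by
    rw [Complex.ofReal_mul, mul_pow, ← Complex.ofReal_pow, h3]; norm_num
  have hval2 : ((2 * d : ℝ) : ℂ)^2 = 4*((d:ℝ):ℂ)^2 := by push_cast; ring
  have hval13 : ((Real.sqrt 13 * d : ℝ) : ℂ)^2 = 13*((d:ℝ):ℂ)^2 := by
    rw [Complex.ofReal_mul, mul_pow, ← Complex.ofReal_pow, h13s]; norm_num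
  rw [hval3] at e10
  rw [hval2] at e8 e9
  rw [hval13]
  exact alg_sqrt13 (f (g 0 0)) (f (g d 0)) (f (g (d/2) (Real.sqrt 3/2*d)))
    (f (g (3*d/2) (Real.sqrt 3/2*d))) (f (g (2*d) (Real.sqrt 3*d)))
    (f (g (5*d/2) (3*Real.sqrt 3/2*d))) (((d:ℝ):ℂ)^2) hc
    e1 e2 e3 e4 e5 e6 e7 e8 e9 e10

set_option maxHeartbeats 2000000 in
lemma sqrt2_mem {d : ℝ} (hd : d ∈ D) (h2D : 2*d ∈ D) (h13D : Real.sqrt 13 * d ∈ D) :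
    Real.sqrt 2 * d ∈ D := by
  obtain ⟨hd0, hD⟩ := hd
  have h2s : Real.sqrt 2 ^ 2 = 2 := Real.sq_sqrt (by norm_num)
  have h13s : Real.sqrt 13 ^ 2 = 13 := Real.sq_sqrt (by norm_num)
  have hc : ((d:ℝ):ℂ)^2 ≠ 0 := pow_ne_zero 2 (Complex.ofReal_ne_zero.mpr hd0.ne')
  refine ⟨by positivity, ?_⟩
  intro x y hxy
  obtain ⟨g, hg0, hgy, hgd⟩ := exists_frame x y d d (by positivity)
    (by rw [hxy]; exact (sqrt_eq' (by positivity) (by linear_combination (d^2)*h2s)).symm)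
  rw [← hg0, ← hgy]
  obtain ⟨S1, f1, m1a, m1b, F1⟩ := hD (g 0 0) (g d 0)
    (by rw [hgd]; exact sqrt_eq' hd0.le (by ring))
  obtain ⟨S2, f2, m2a, m2b, F2⟩ := hD (g d 0) (g (2*d) 0)
    (by rw [hgd]; exact sqrt_eq' hd0.le (by ring))
  obtain ⟨S3, f3, m3a, m3b, F3⟩ := h2D.2 (g 0 0) (g (2*d) 0)
    (by rw [hgd]; exact sqrt_eq' (by positivity) (by ring))
  obtain ⟨S4, f4, m4a, m4b, F4⟩ := hD (g 0 0) (g 0 d)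
    (by rw [hgd]; exact sqrt_eq' hd0.le (by ring))
  obtain ⟨S5, f5, m5a, m5b, F5⟩ := hD (g 0 d) (g 0 (2*d))
    (by rw [hgd]; exact sqrt_eq' hd0.le (by ring))
  obtain ⟨S6, f6, m6a, m6b, F6⟩ := hD (g 0 (2*d)) (g 0 (3*d))
    (by rw [hgd]; exact sqrt_eq' hd0.le (by ring))
  obtain ⟨S7, f7, m7a, m7b, F7⟩ := h2D.2 (g 0 0) (g 0 (2*d))
    (by rw [hgd]; exact sqrt_eq' (by positivity) (by ring))
  obtain ⟨S8, f8, m8a, m8b, F8⟩ := h2D.2 (g 0 d) (g 0 (3*d))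
    (by rw [hgd]; exact sqrt_eq' (by positivity) (by ring))
  obtain ⟨S9, f9, m9a, m9b, F9⟩ := hD (g (2*d) 0) (g (2*d) d)
    (by rw [hgd]; exact sqrt_eq' hd0.le (by ring))
  obtain ⟨S10, f10, m10a, m10b, F10⟩ := hD (g (2*d) d) (g (2*d) (2*d))
    (by rw [hgd]; exact sqrt_eq' hd0.le (by ring))
  obtain ⟨S11, f11, m11a, m11b, F11⟩ := hD (g (2*d) (2*d)) (g (2*d) (3*d))
    (by rw [hgd]; exact sqrt_eq' hd0.le (by ring))
  obtain ⟨S12, f12, m12a, m12b, F12⟩ := h2D.2 (g (2*d) 0) (g (2*d) (2*d))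
    (by rw [hgd]; exact sqrt_eq' (by positivity) (by ring))
  obtain ⟨S13, f13, m13a, m13b, F13⟩ := h2D.2 (g (2*d) d) (g (2*d) (3*d))
    (by rw [hgd]; exact sqrt_eq' (by positivity) (by ring))
  obtain ⟨S14, f14, m14a, m14b, F14⟩ := hD (g d 0) (g d d)
    (by rw [hgd]; exact sqrt_eq' hd0.le (by ring))
  obtain ⟨S15, f15, m15a, m15b, F15⟩ := hD (g 0 d) (g d d)
    (by rw [hgd]; exact sqrt_eq' hd0.le (by ring))
  obtain ⟨S16, f16, m16a, m16b, F16⟩ := hD (g d d) (g (2*d) d)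
    (by rw [hgd]; exact sqrt_eq' hd0.le (by ring))
  obtain ⟨S17, f17, m17a, m17b, F17⟩ := h2D.2 (g 0 d) (g (2*d) d)
    (by rw [hgd]; exact sqrt_eq' (by positivity) (by ring))
  obtain ⟨S18, f18, m18a, m18b, F18⟩ := h13D.2 (g 0 0) (g (2*d) (3*d))
    (by rw [hgd]; exact sqrt_eq' (by positivity) (by linear_combination (d^2)*h13s))
  obtain ⟨S19, f19, m19a, m19b, F19⟩ := h13D.2 (g (2*d) 0) (g 0 (3*d))
    (by rw [hgd]; exact sqrt_eq' (by positivity) (by linear_combination (d^2)*h13s))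
  refine ⟨S1 ∪ S2 ∪ S3 ∪ S4 ∪ S5 ∪ S6 ∪ S7 ∪ S8 ∪ S9 ∪ S10 ∪ S11 ∪ S12 ∪ S13 ∪ S14 ∪ S15 ∪ S16 ∪ S17 ∪ S18 ∪ S19,
    ((((((((((((((((((f1.union f2).union f3).union f4).union f5).union f6).union f7).union f8).union f9).union f10).union f11).union f12).union f13).union f14).union f15).union f16).union f17).union f18).union f19),
    by simp only [Set.mem_union]; tauto, by simp only [Set.mem_union]; tauto, ?_⟩
  intro f hf
  have e1 := F1 f (union_force (by intro a ha; simp only [Set.mem_union]; tauto) hf)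
  have e2 := F2 f (union_force (by intro a ha; simp only [Set.mem_union]; tauto) hf)
  have e3 := F3 f (union_force (by intro a ha; simp only [Set.mem_union]; tauto) hf)
  have e4 := F4 f (union_force (by intro a ha; simp only [Set.mem_union]; tauto) hf)
  have e5 := F5 f (union_force (by intro a ha; simp only [Set.mem_union]; tauto) hf)
  have e6 := F6 f (union_force (by intro a ha; simp only [Set.mem_union]; tauto) hf)
  have e7 := F7 f (union_force (by intro a ha; simp only [Set.mem_union]; tauto) hf)
  have e8 := F8 f (union_force (by intro a ha; simp only [Set.mem_union]; tauto) hf)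
  have e9 := F9 f (union_force (by intro a ha; simp only [Set.mem_union]; tauto) hf)
  have e10 := F10 f (union_force (by intro a ha; simp only [Set.mem_union]; tauto) hf)
  have e11 := F11 f (union_force (by intro a ha; simp only [Set.mem_union]; tauto) hf)
  have e12 := F12 f (union_force (by intro a ha; simp only [Set.mem_union]; tauto) hf)
  have e13 := F13 f (union_force (by intro a ha; simp only [Set.mem_union]; tauto) hf)
  have e14 := F14 f (union_force (by intro a ha; simp only [Set.mem_union]; tauto) hf)
  have e15 := F15 f (union_force (by intro a ha; simp only [Set.mem_union]; tauto) hf)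
  have e16 := F16 f (union_force (by intro a ha; simp only [Set.mem_union]; tauto) hf)
  have e17 := F17 f (union_force (by intro a ha; simp only [Set.mem_union]; tauto) hf)
  have e18 := F18 f (union_force (by intro a ha; simp only [Set.mem_union]; tauto) hf)
  have e19 := F19 f (union_force (by intro a ha; simp only [Set.mem_union]; tauto) hf)
  have hval2 : ((2 * d : ℝ) : ℂ)^2 = 4*((d:ℝ):ℂ)^2 := by push_cast; ring
  have hval13 : ((Real.sqrt 13 * d : ℝ) : ℂ)^2 = 13*((d:ℝ):ℂ)^2 := by
    rw [Complex.ofReal_mul, mul_pow, ← Complex.ofReal_pow, h13s]; norm_num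
  have hvals2 : ((Real.sqrt 2 * d : ℝ) : ℂ)^2 = 2*((d:ℝ):ℂ)^2 := by
    rw [Complex.ofReal_mul, mul_pow, ← Complex.ofReal_pow, h2s]; norm_num
  rw [hval2] at e3 e7 e8 e12 e13 e17
  rw [hval13] at e18 e19
  rw [hvals2]
  exact alg_sqrt2 (f (g 0 0)) (f (g d 0)) (f (g (2*d) 0)) (f (g 0 d)) (f (g 0 (2*d)))
    (f (g 0 (3*d))) (f (g d d)) (f (g (2*d) d)) (f (g (2*d) (2*d))) (f (g (2*d) (3*d)))
    (((d:ℝ):ℂ)^2) hc e1 e2 e3 e4 e5 e6 e7 e8 e9 e10 e11 e12 e13 e14 e15 e16 e17 e18 e19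

theorem sqrt_two_mul_mem_D {d : ℝ} (hd : d ∈ D) : Real.sqrt 2 * d ∈ D := by
  have h3D := sqrt3_mem hd
  have h2D := two_mem hd h3D
  have h13D := sqrt13_mem hd h2D h3D
  exact sqrt2_mem hd h2D h13D
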